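/- Let A be a real m×n matrix, L an invertible real n×n matrix, g ∈ ℝ^m, and set M := LᵀL. Then for every i ≥ 1, the Krylov subspace of the priorconditioned operator for the transformed variable is the image under L of the Krylov subspace of the left-preconditioned operator for the original variable: K_i(L^{−ᵀ}AᵀAL^{−1}, L^{−ᵀ}Aᵀg) = L · K_i(M^{−1}AᵀA, M^{−1}Aᵀg), where L·V denotes the image of the subspace V under the linear map L. -/
import Mathlib


open Matrix

/-- The `i`-th Krylov subspace `K_i(S, b) = span {b, S b, …, S^{i-1} b}`. -/
def krylov {n : ℕ} (S : Matrix (Fin n) (Fin n) ℝ) (b : Fin n → ℝ) (i : ℕ) :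
    Submodule ℝ (Fin n → ℝ) :=
  Submodule.span ℝ {v | ∃ j < i, v = (S ^ j).mulVec b}

theorem priorconditioned_krylov_image
    {m n : ℕ} (A : Matrix (Fin m) (Fin n) ℝ) (L : Matrix (Fin n) (Fin n) ℝ)
    (hL : IsUnit L.det) (g : Fin m → ℝ)
    (M : Matrix (Fin n) (Fin n) ℝ) (hM : M = Lᵀ * L) (i : ℕ) (hi : 1 ≤ i) :
    krylov ((L⁻¹)ᵀ * Aᵀ * A * L⁻¹) (((L⁻¹)ᵀ * Aᵀ).mulVec g) i
      = Submodule.map L.mulVecLin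
          (krylov (M⁻¹ * Aᵀ * A) (M⁻¹.mulVec (Aᵀ.mulVec g)) i) := by
  have hLT : IsUnit Lᵀ.det := by rwa [Matrix.det_transpose]
  have hMinv : M⁻¹ = L⁻¹ * (L⁻¹)ᵀ := by
    rw [hM, Matrix.mul_inv_rev, Matrix.transpose_nonsing_inv]
  have hLM : L * M⁻¹ = (L⁻¹)ᵀ := by
    rw [hMinv, ← Matrix.mul_assoc, Matrix.mul_nonsing_inv _ hL, Matrix.one_mul]
  set S1 := (L⁻¹)ᵀ * Aᵀ * A * L⁻¹ with hS1
  set S2 := M⁻¹ * Aᵀ * A with hS2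
  have hcomm : S1 * L = L * S2 := by
    rw [hS1, hS2, Matrix.mul_assoc _ L⁻¹ L, Matrix.nonsing_inv_mul _ hL, Matrix.mul_one,
      ← hLM]
    simp [Matrix.mul_assoc]
  have hb : ((L⁻¹)ᵀ * Aᵀ).mulVec g = L.mulVec (M⁻¹.mulVec (Aᵀ.mulVec g)) := by
    simp only [Matrix.mulVec_mulVec]
    rw [← Matrix.mul_assoc, hLM]
  have key : ∀ j : ℕ, (S1 ^ j).mulVec (((L⁻¹)ᵀ * Aᵀ).mulVec g)
      = L.mulVec ((S2 ^ j).mulVec (M⁻¹.mulVec (Aᵀ.mulVec g))) := by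
    intro j
    have hpow : S1 ^ j * L = L * S2 ^ j := by
      induction j with
      | zero => simp
      | succ k ih =>
        rw [pow_succ, pow_succ, Matrix.mul_assoc, hcomm, ← Matrix.mul_assoc, ih,
          Matrix.mul_assoc]
    rw [hb, Matrix.mulVec_mulVec, hpow]
    simp only [Matrix.mulVec_mulVec, Matrix.mul_assoc]
  unfold krylov
  rw [Submodule.map_span]
  congr 1
  ext v
  simp only [Set.mem_image, Set.mem_setOf_eq, Matrix.mulVecLin_apply]
  constructor
  · rintro ⟨j, hj, rfl⟩
    exact ⟨(S2 ^ j).mulVec (M⁻¹.mulVec (Aᵀ.mulVec g)), ⟨j, hj, rfl⟩, (key j).symm⟩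
  · rintro ⟨w, ⟨j, hj, rfl⟩, rfl⟩
    exact ⟨j, hj, (key j).symm⟩
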